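/- Let 0 < ε < 1 and suppose real numbers b₁,…,bₖ ∈ [0, 1 − ε] and positive integers n₁,…,nₖ, n satisfy Σᵢ nᵢ bᵢ + n(1 − a) = 2 with 0 < a < ε ≤ mf₂, where mf₂ > 0 is chosen so that no sum Σ xⱼ bⱼ with bⱼ ∈ 𝒜 ∪ {1}, xⱼ ∈ (1 − mf₂, 1], some xⱼ < 1, equals 2. Then a contradiction follows; i.e., such a, bᵢ, nᵢ, n cannot exist. -/

import Mathlib

/-- A set of reals satisfies the descending chain condition if it contains
no infinite strictly decreasing sequence. -/
def DCC (A : Set ℝ) : Prop :=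
  ¬ ∃ f : ℕ → ℝ, (∀ n, f n ∈ A) ∧ StrictAnti f

/-- Arithmetic core of Lemma 2.3: with `mf₂` chosen by the Alexeev–Mori DCC
lemma for the set `A ∪ {1}` and target value `2`, the equation
`∑ nᵢ bᵢ + n (1 - a) = 2` with `bᵢ ∈ A`, `bᵢ ≤ 1 - ε`, `nᵢ, n` positive
integers, and `0 < a < ε ≤ mf₂`, has no solutions. -/
theorem no_solution_fiber_equation
    (ε mf₂ : ℝ) (hε0 : 0 < ε) (hε1 : ε < 1) (hεmf : ε ≤ mf₂) (hmf : 0 < mf₂)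
    (A : Set ℝ) (hA : A ⊆ Set.Icc 0 1) (hDCC : DCC A)
    (hAM : ∀ (l : ℕ) (bb x : Fin l → ℝ),
      (∀ j, bb j ∈ A ∪ {1}) → (∀ j, 1 - mf₂ < x j ∧ x j ≤ 1) →
      (∃ j, x j < 1) → (∑ j, x j * bb j) ≠ 2)
    (k : ℕ) (b : Fin k → ℝ) (hb : ∀ i, b i ∈ A) (hb' : ∀ i, 0 ≤ b i ∧ b i ≤ 1 - ε)
    (m : Fin k → ℕ) (hm : ∀ i, 0 < m i) (n : ℕ) (hn : 0 < n)
    (a : ℝ) (ha0 : 0 < a) (haε : a < ε)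
    (heq : (∑ i, (m i : ℝ) * b i) + (n : ℝ) * (1 - a) = 2) :
    False := by
  classical
  -- index type: one copy of `b i` for each of the `m i` multiplicities, plus `n` copies of `1`
  let ι := ((Σ i : Fin k, Fin (m i)) ⊕ Fin n)
  let bb : ι → ℝ := Sum.elim (fun p => b p.1) (fun _ => 1)
  let x : ι → ℝ := Sum.elim (fun _ => 1) (fun _ => 1 - a)
  let e : ι ≃ Fin (Fintype.card ι) := Fintype.equivFin ι
  refine hAM (Fintype.card ι) (bb ∘ e.symm) (x ∘ e.symm) ?_ ?_ ?_ ?_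
  · intro j
    rcases h : e.symm j with p | q
    · simp only [Function.comp, h, bb, Sum.elim_inl]
      exact Or.inl (hb p.1)
    · simp only [Function.comp, h, bb, Sum.elim_inr]
      exact Or.inr rfl
  · intro j
    rcases h : e.symm j with p | q
    · simp only [Function.comp, h, x, Sum.elim_inl]
      constructor
      · linarith
      · exact le_refl 1
    · simp only [Function.comp, h, x, Sum.elim_inr]
      constructor
      · linarith
      · linarith
  · refine ⟨e (Sum.inr ⟨0, hn⟩), ?_⟩
    simp only [Function.comp, Equiv.symm_apply_apply, x, Sum.elim_inr]
    linarith
  · have : ∑ j, (x ∘ e.symm) j * (bb ∘ e.symm) j = ∑ t : ι, x t * bb t := by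
      exact Fintype.sum_equiv e.symm _ _ (fun j => rfl)
    rw [this]
    have : ∑ t : ι, x t * bb t
        = (∑ i, (m i : ℝ) * b i) + (n : ℝ) * (1 - a) := by
      rw [Fintype.sum_sum_type]
      congr 1
      · rw [← Finset.univ_sigma_univ, Finset.sum_sigma]
        simp [x, bb, mul_comm]
      · simp [x, bb, mul_comm]
        ring
    rw [this, heq]
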